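/- In any double Boolean algebra D, the set D_⊓ = {x | x ⊓ x = x} with operations ⊓, x ∨̄ y := ¬̄(¬̄x ⊓ ¬̄y), negation ¬̄, bottom ⊥ and top ¬̄⊥ forms a Boolean algebra. -/

import Mathlib

/-- The operations of a double Boolean algebra. -/
structure DBAOps (D : Type*) where
  sqcup : D → D → D
  sqcap : D → D → D
  neg : D → D
  dneg : D → D
  top : D
  bot : D

/-- Derived join x ∨̄ y := ¬̄(¬̄x ⊓ ¬̄y). -/
def DBAOps.vee {D : Type*} (o : DBAOps D) (x y : D) : D :=
  o.neg (o.sqcap (o.neg x) (o.neg y))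

/-- Derived meet x ∧̄ y := ⌟(⌟x ⊔ ⌟y). -/
def DBAOps.wedge {D : Type*} (o : DBAOps D) (x y : D) : D :=
  o.dneg (o.sqcup (o.dneg x) (o.dneg y))

/-- Wille's axioms for a double Boolean algebra. -/
structure IsDBA {D : Type*} (o : DBAOps D) : Prop where
  ax1a : ∀ x y, o.sqcap (o.sqcap x x) y = o.sqcap x y
  ax1b : ∀ x y, o.sqcup (o.sqcup x x) y = o.sqcup x y
  ax2a : ∀ x y, o.sqcap x y = o.sqcap y x
  ax2b : ∀ x y, o.sqcup x y = o.sqcup y x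
  ax3a : ∀ x, o.neg (o.sqcap x x) = o.neg x
  ax3b : ∀ x, o.dneg (o.sqcup x x) = o.dneg x
  ax4a : ∀ x y, o.sqcap x (o.sqcup x y) = o.sqcap x x
  ax4b : ∀ x y, o.sqcup x (o.sqcap x y) = o.sqcup x x
  ax5a : ∀ x y z, o.sqcap x (o.vee y z) = o.vee (o.sqcap x y) (o.sqcap x z)
  ax5b : ∀ x y z, o.sqcup x (o.wedge y z) = o.wedge (o.sqcup x y) (o.sqcup x z)
  ax6a : ∀ x y, o.sqcap x (o.vee x y) = o.sqcap x x
  ax6b : ∀ x y, o.sqcup x (o.wedge x y) = o.sqcup x x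
  ax7a : ∀ x y, o.neg (o.neg (o.sqcap x y)) = o.sqcap x y
  ax7b : ∀ x y, o.dneg (o.dneg (o.sqcup x y)) = o.sqcup x y
  ax8a : ∀ x, o.sqcap x (o.neg x) = o.bot
  ax8b : ∀ x, o.sqcup x (o.dneg x) = o.top
  ax9a : o.neg o.top = o.bot
  ax9b : o.dneg o.bot = o.top
  ax10a : ∀ x y z, o.sqcap x (o.sqcap y z) = o.sqcap (o.sqcap x y) z
  ax10b : ∀ x y z, o.sqcup x (o.sqcup y z) = o.sqcup (o.sqcup x y) z
  ax11a : o.neg o.bot = o.sqcap o.top o.top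
  ax11b : o.dneg o.top = o.sqcup o.bot o.bot
  ax12 : ∀ x, o.sqcup (o.sqcap x x) (o.sqcap x x) = o.sqcap (o.sqcup x x) (o.sqcup x x)

namespace DBAaux

variable {D : Type*} {o : DBAOps D} (h : IsDBA o)
include h

/-- x ⊓ y is always ⊓-idempotent. -/
lemma inf_closed (x y : D) : o.sqcap (o.sqcap x y) (o.sqcap x y) = o.sqcap x y := by
  calc o.sqcap (o.sqcap x y) (o.sqcap x y)
      = o.sqcap x (o.sqcap y (o.sqcap x y)) := (h.ax10a x y _).symm
    _ = o.sqcap x (o.sqcap y (o.sqcap y x)) := by rw [h.ax2a x y]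
    _ = o.sqcap x (o.sqcap (o.sqcap y y) x) := by rw [h.ax10a y y x]
    _ = o.sqcap x (o.sqcap y x) := by rw [h.ax1a y x]
    _ = o.sqcap x (o.sqcap x y) := by rw [h.ax2a y x]
    _ = o.sqcap (o.sqcap x x) y := h.ax10a x x y
    _ = o.sqcap x y := h.ax1a x y

/-- ¬¬x = x ⊓ x. -/
lemma dd (x : D) : o.neg (o.neg x) = o.sqcap x x := by
  rw [← h.ax3a x]; exact h.ax7a x x

lemma dd_idem {a : D} (ha : o.sqcap a a = a) : o.neg (o.neg a) = a := by
  rw [dd h a, ha]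

/-- ¬x is always ⊓-idempotent. -/
lemma neg_idem (x : D) : o.sqcap (o.neg x) (o.neg x) = o.neg x := by
  calc o.sqcap (o.neg x) (o.neg x)
      = o.neg (o.neg (o.sqcap (o.neg x) (o.neg x))) := (h.ax7a _ _).symm
    _ = o.neg (o.neg (o.neg x)) := by rw [h.ax3a (o.neg x)]
    _ = o.neg (o.sqcap x x) := by rw [dd h x]
    _ = o.neg x := h.ax3a x

lemma vee_idem (x y : D) : o.sqcap (o.vee x y) (o.vee x y) = o.vee x y :=
  neg_idem h _

lemma bot_inf (x : D) : o.sqcap o.bot x = o.bot := by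
  calc o.sqcap o.bot x
      = o.sqcap (o.sqcap x (o.neg x)) x := by rw [h.ax8a x]
    _ = o.sqcap x (o.sqcap (o.neg x) x) := (h.ax10a _ _ _).symm
    _ = o.sqcap x (o.sqcap x (o.neg x)) := by rw [h.ax2a (o.neg x) x]
    _ = o.sqcap (o.sqcap x x) (o.neg x) := h.ax10a _ _ _
    _ = o.sqcap x (o.neg x) := h.ax1a _ _
    _ = o.bot := h.ax8a x

lemma bot_idem : o.sqcap o.bot o.bot = o.bot := bot_inf h o.bot

lemma inf_negbot (x : D) : o.sqcap x (o.neg o.bot) = o.sqcap x x := by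
  calc o.sqcap x (o.neg o.bot)
      = o.sqcap x (o.sqcap o.top o.top) := by rw [h.ax11a]
    _ = o.sqcap (o.sqcap o.top o.top) x := h.ax2a _ _
    _ = o.sqcap o.top x := h.ax1a _ _
    _ = o.sqcap x o.top := h.ax2a _ _
    _ = o.sqcap x (o.sqcup x (o.dneg x)) := by rw [h.ax8b x]
    _ = o.sqcap x x := h.ax4a x _

lemma deMorgan {a b : D} (ha : o.sqcap a a = a) (hb : o.sqcap b b = b) :
    o.neg (o.sqcap a b) = o.vee (o.neg a) (o.neg b) := by
  unfold DBAOps.vee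
  rw [dd_idem h ha, dd_idem h hb]

lemma vee_comm (x y : D) : o.vee x y = o.vee y x := by
  unfold DBAOps.vee; rw [h.ax2a (o.neg x) (o.neg y)]

lemma vee_assoc (x y z : D) : o.vee (o.vee x y) z = o.vee x (o.vee y z) := by
  unfold DBAOps.vee
  rw [dd h (o.sqcap (o.neg x) (o.neg y))]
  rw [dd h (o.sqcap (o.neg y) (o.neg z))]
  rw [h.ax1a (o.sqcap (o.neg x) (o.neg y)) (o.neg z)]
  rw [h.ax2a (o.neg x) (o.sqcap _ _), h.ax1a (o.sqcap (o.neg y) (o.neg z)) (o.neg x)]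
  rw [h.ax2a (o.sqcap (o.neg y) (o.neg z)) (o.neg x), h.ax10a]

lemma inf_vee_self {a : D} (ha : o.sqcap a a = a) (b : D) :
    o.sqcap a (o.vee a b) = a := by rw [h.ax6a a b, ha]

lemma vee_inf_self {a b : D} (ha : o.sqcap a a = a) (hb : o.sqcap b b = b) :
    o.vee a (o.sqcap a b) = a := by
  show o.neg (o.sqcap (o.neg a) (o.neg (o.sqcap a b))) = a
  rw [deMorgan h ha hb]
  rw [h.ax6a (o.neg a) (o.neg b)]
  rw [h.ax3a (o.neg a)]
  exact dd_idem h ha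

lemma inf_compl {a : D} : o.sqcap a (o.neg a) = o.bot := h.ax8a a

lemma vee_compl {a : D} (ha : o.sqcap a a = a) : o.vee a (o.neg a) = o.neg o.bot := by
  show o.neg (o.sqcap (o.neg a) (o.neg (o.neg a))) = o.neg o.bot
  rw [dd_idem h ha, h.ax2a (o.neg a) a, h.ax8a a]

end DBAaux

/-- In any double Boolean algebra D, the set D_⊓ = {x | x ⊓ x = x} with meet ⊓,
join ∨̄, negation ¬̄, bottom ⊥ and top ¬̄⊥ forms a Boolean algebra. -/
theorem dba_Dcap_boolean_algebra {D : Type*} (o : DBAOps D) (h : IsDBA o) :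
    ∃ inst : BooleanAlgebra {x : D // o.sqcap x x = x},
      (∀ x y : {x : D // o.sqcap x x = x},
        (inst.inf x y).1 = o.sqcap x.1 y.1) ∧
      (∀ x y : {x : D // o.sqcap x x = x},
        (inst.sup x y).1 = o.vee x.1 y.1) ∧
      (∀ x : {x : D // o.sqcap x x = x},
        (inst.compl x).1 = o.neg x.1) ∧
      (inst.bot.1 = o.bot) ∧
      (inst.top.1 = o.neg o.bot) := by
  letI instMax : Max {x : D // o.sqcap x x = x} :=
    ⟨fun a b => ⟨o.vee a.1 b.1, DBAaux.vee_idem h a.1 b.1⟩⟩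
  letI instMin : Min {x : D // o.sqcap x x = x} :=
    ⟨fun a b => ⟨o.sqcap a.1 b.1, DBAaux.inf_closed h a.1 b.1⟩⟩
  letI lat : Lattice {x : D // o.sqcap x x = x} :=
    Lattice.mk'
      (fun a b => Subtype.ext (DBAaux.vee_comm h a.1 b.1))
      (fun a b c => Subtype.ext (DBAaux.vee_assoc h a.1 b.1 c.1))
      (fun a b => Subtype.ext (h.ax2a a.1 b.1))
      (fun a b c => Subtype.ext (h.ax10a a.1 b.1 c.1).symm)
      (fun a b => Subtype.ext (DBAaux.vee_inf_self h a.2 b.2))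
      (fun a b => Subtype.ext (DBAaux.inf_vee_self h a.2 b.1))
  letI dl : DistribLattice {x : D // o.sqcap x x = x} :=
    DistribLattice.ofInfSupLe (fun a b c => le_of_eq (Subtype.ext (h.ax5a a.1 b.1 c.1)))
  letI instTop : Top {x : D // o.sqcap x x = x} := ⟨⟨o.neg o.bot, DBAaux.neg_idem h o.bot⟩⟩
  letI instBot : Bot {x : D // o.sqcap x x = x} := ⟨⟨o.bot, DBAaux.bot_idem h⟩⟩
  letI instCompl : Compl {x : D // o.sqcap x x = x} :=
    ⟨fun a => ⟨o.neg a.1, DBAaux.neg_idem h a.1⟩⟩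
  letI inst : BooleanAlgebra {x : D // o.sqcap x x = x} :=
    { dl with
      compl := fun a => aᶜ
      top := ⊤
      bot := ⊥
      inf_compl_le_bot := fun a => le_of_eq (Subtype.ext (h.ax8a a.1))
      top_le_sup_compl := fun a => le_of_eq (Subtype.ext (DBAaux.vee_compl h a.2)).symm
      le_top := fun a => inf_eq_left.mp (Subtype.ext (by
        show o.sqcap a.1 (o.neg o.bot) = a.1
        rw [DBAaux.inf_negbot h a.1, a.2]))
      bot_le := fun a => inf_eq_left.mp (Subtype.ext (DBAaux.bot_inf h a.1))
      sdiff := fun a b => a ⊓ bᶜ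
      himp := fun a b => b ⊔ aᶜ
      sdiff_eq := fun _ _ => rfl
      himp_eq := fun _ _ => rfl }
  exact ⟨inst, fun x y => rfl, fun x y => rfl, fun x => rfl, rfl, rfl⟩
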